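/- arXiv:1509.01032 — 2 statements merged into one kernel-verified Lean document; each statement's English description precedes it below -/
import Mathlib

section
/- Let n ≥ 9 and let i be an integer with 0 ≤ i ≤ n−7. Define permutations ρ_0, …, ρ_{n−4} of {1, …, n} by: ρ_j = (j+1, j+2) for 0 ≤ j ≤ i; ρ_{i+1} = (i+2, i+3)(i+4, i+5); ρ_{i+2} = (i+3, i+4)(i+5, i+6); and ρ_j = (j+3, j+4) for i+3 ≤ j ≤ n−4. Then the intersection of the subgroup generated by ρ_0, …, ρ_{i+2} with the subgroup generated by ρ_{i+1}, …, ρ_{n−4} is strictly larger than the subgroup generated by ρ_{i+1} and ρ_{i+2}; in particular, ρ_0, …, ρ_{n−4} do not satisfy the intersection property and hence do not form a string C-group. -/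
open Equiv Subgroup

lemma fne {n p q : ℕ} (hp : p < n) (hq : q < n) (h : p ≠ q) :
    (⟨p, hp⟩ : Fin n) ≠ ⟨q, hq⟩ := by simpa [Fin.ext_iff] using h

lemma memA {α : Type*} [DecidableEq α] (y0 y1 y2 y3 y4 : α)
    (n01 : y0 ≠ y1) (n02 : y0 ≠ y2) (n03 : y0 ≠ y3) (n04 : y0 ≠ y4)
    (n12 : y1 ≠ y2) (n13 : y1 ≠ y3) (n14 : y1 ≠ y4) :
    Equiv.swap y3 y4 ∈
      Subgroup.closure {Equiv.swap y0 y1, Equiv.swap y1 y2 * Equiv.swap y3 y4} := by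
  have hs : Equiv.swap y0 y1 ∈
      Subgroup.closure {Equiv.swap y0 y1, Equiv.swap y1 y2 * Equiv.swap y3 y4} :=
    Subgroup.subset_closure (by simp)
  have ha : Equiv.swap y1 y2 * Equiv.swap y3 y4 ∈
      Subgroup.closure {Equiv.swap y0 y1, Equiv.swap y1 y2 * Equiv.swap y3 y4} :=
    Subgroup.subset_closure (by simp)
  set f : Equiv.Perm α := Equiv.swap y0 y1 * (Equiv.swap y1 y2 * Equiv.swap y3 y4) with hf
  have ef0 : f y0 = y1 := by
    simp only [hf, Equiv.Perm.mul_apply]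
    rw [Equiv.swap_apply_of_ne_of_ne n03 n04, Equiv.swap_apply_of_ne_of_ne n01 n02,
      Equiv.swap_apply_left]
  have ef1 : f y1 = y2 := by
    simp only [hf, Equiv.Perm.mul_apply]
    rw [Equiv.swap_apply_of_ne_of_ne n13 n14, Equiv.swap_apply_left,
      Equiv.swap_apply_of_ne_of_ne n02.symm n12.symm]
  have h12 : Equiv.swap y1 y2 = f * Equiv.swap y0 y1 * f⁻¹ := by
    have h := Equiv.swap_apply_apply f y0 y1
    rw [ef0, ef1] at h
    exact h
  have key : Equiv.swap y3 y4 =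
      (f * Equiv.swap y0 y1 * f⁻¹) * (Equiv.swap y1 y2 * Equiv.swap y3 y4) := by
    rw [← h12, ← mul_assoc, Equiv.swap_mul_self, one_mul]
  have hm := mul_mem (mul_mem (mul_mem (mul_mem hs ha) hs) (inv_mem (mul_mem hs ha))) ha
  rwa [← key] at hm

lemma memB {α : Type*} [DecidableEq α] (y1 y2 y3 y4 y5 y6 : α)
    (n12 : y1 ≠ y2) (n13 : y1 ≠ y3) (n14 : y1 ≠ y4) (n15 : y1 ≠ y5) (n16 : y1 ≠ y6)
    (n23 : y2 ≠ y3) (n24 : y2 ≠ y4) (n25 : y2 ≠ y5) (n26 : y2 ≠ y6)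
    (n34 : y3 ≠ y4) (n35 : y3 ≠ y5) (n36 : y3 ≠ y6)
    (n45 : y4 ≠ y5) (n46 : y4 ≠ y6) (n56 : y5 ≠ y6) :
    Equiv.swap y3 y4 ∈
      Subgroup.closure {Equiv.swap y1 y2 * Equiv.swap y3 y4,
        Equiv.swap y2 y3 * Equiv.swap y4 y5, Equiv.swap y5 y6} := by
  set S : Set (Equiv.Perm α) := {Equiv.swap y1 y2 * Equiv.swap y3 y4,
        Equiv.swap y2 y3 * Equiv.swap y4 y5, Equiv.swap y5 y6} with hS
  have hA : Equiv.swap y1 y2 * Equiv.swap y3 y4 ∈ Subgroup.closure S :=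
    Subgroup.subset_closure (by simp [hS])
  have hB : Equiv.swap y2 y3 * Equiv.swap y4 y5 ∈ Subgroup.closure S :=
    Subgroup.subset_closure (by simp [hS])
  have hC : Equiv.swap y5 y6 ∈ Subgroup.closure S :=
    Subgroup.subset_closure (by simp [hS])
  -- d1 = swap y4 y6
  have h46 : Equiv.swap y4 y6 = (Equiv.swap y2 y3 * Equiv.swap y4 y5) * Equiv.swap y5 y6 *
      (Equiv.swap y2 y3 * Equiv.swap y4 y5)⁻¹ := by
    have h := Equiv.swap_apply_apply (Equiv.swap y2 y3 * Equiv.swap y4 y5) y5 y6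
    rw [Equiv.Perm.mul_apply, Equiv.Perm.mul_apply, Equiv.swap_apply_right,
      Equiv.swap_apply_of_ne_of_ne n24.symm n34.symm,
      Equiv.swap_apply_of_ne_of_ne n46.symm n56.symm,
      Equiv.swap_apply_of_ne_of_ne n26.symm n36.symm] at h
    exact h
  have m46 : Equiv.swap y4 y6 ∈ Subgroup.closure S := by
    have hm := mul_mem (mul_mem hB hC) (inv_mem hB)
    rwa [← h46] at hm
  -- d2 = swap y3 y6
  have h36 : Equiv.swap y3 y6 = (Equiv.swap y1 y2 * Equiv.swap y3 y4) * Equiv.swap y4 y6 *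
      (Equiv.swap y1 y2 * Equiv.swap y3 y4)⁻¹ := by
    have h := Equiv.swap_apply_apply (Equiv.swap y1 y2 * Equiv.swap y3 y4) y4 y6
    rw [Equiv.Perm.mul_apply, Equiv.Perm.mul_apply, Equiv.swap_apply_right,
      Equiv.swap_apply_of_ne_of_ne n13.symm n23.symm,
      Equiv.swap_apply_of_ne_of_ne n36.symm n46.symm,
      Equiv.swap_apply_of_ne_of_ne n16.symm n26.symm] at h
    exact h
  have m36 : Equiv.swap y3 y6 ∈ Subgroup.closure S := by
    have hm := mul_mem (mul_mem hA m46) (inv_mem hA)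
    rwa [← h36] at hm
  -- g = swap y3 y4
  have h34 : Equiv.swap y3 y4 = Equiv.swap y4 y6 * Equiv.swap y3 y6 * (Equiv.swap y4 y6)⁻¹ := by
    have h := Equiv.swap_apply_apply (Equiv.swap y4 y6) y3 y6
    rw [Equiv.swap_apply_of_ne_of_ne n34 n36, Equiv.swap_apply_right] at h
    exact h
  have hm := mul_mem (mul_mem m46 m36) (inv_mem m46)
  rwa [← h34] at hm


/-- The intersection property for a family of permutations indexed by `Fin r`. -/
def IntersectionProperty {n r : ℕ} (ρ : Fin r → Equiv.Perm (Fin n)) : Prop :=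
  ∀ J K : Set (Fin r),
    Subgroup.closure (ρ '' J) ⊓ Subgroup.closure (ρ '' K) =
      Subgroup.closure (ρ '' (J ∩ K))

/-- A string C-group: pairwise distinct involutions, satisfying the commuting
property `(ρ i * ρ j) ^ 2 = 1` whenever `|i - j| > 1`, and the intersection property. -/
def IsStringCGroup {n r : ℕ} (ρ : Fin r → Equiv.Perm (Fin n)) : Prop :=
  Function.Injective ρ ∧
  (∀ i, ρ i ≠ 1 ∧ ρ i * ρ i = 1) ∧
  (∀ i j : Fin r, ((i : ℕ) + 1 < (j : ℕ) ∨ (j : ℕ) + 1 < (i : ℕ)) → (ρ i * ρ j) ^ 2 = 1) ∧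
  IntersectionProperty ρ

theorem stmt_9 (n i : ℕ) (hn : 9 ≤ n) (hi : i ≤ n - 7)
    (ρ : Fin (n - 3) → Equiv.Perm (Fin n))
    (hlow : ∀ j : Fin (n - 3), (j : ℕ) ≤ i → ρ j =
      Equiv.swap (⟨(j : ℕ), by have := j.isLt; omega⟩ : Fin n) ⟨(j : ℕ) + 1, by have := j.isLt; omega⟩)
    (hip1 : ρ ⟨i + 1, by omega⟩ =
      Equiv.swap (⟨i + 1, by omega⟩ : Fin n) ⟨i + 2, by omega⟩ *
        Equiv.swap (⟨i + 3, by omega⟩ : Fin n) ⟨i + 4, by omega⟩)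
    (hip2 : ρ ⟨i + 2, by omega⟩ =
      Equiv.swap (⟨i + 2, by omega⟩ : Fin n) ⟨i + 3, by omega⟩ *
        Equiv.swap (⟨i + 4, by omega⟩ : Fin n) ⟨i + 5, by omega⟩)
    (hhigh : ∀ j : Fin (n - 3), i + 3 ≤ (j : ℕ) → ρ j =
      Equiv.swap (⟨(j : ℕ) + 2, by have := j.isLt; omega⟩ : Fin n) ⟨(j : ℕ) + 3, by have := j.isLt; omega⟩) :
    Subgroup.closure (ρ '' ({j : Fin (n - 3) | (j : ℕ) ≤ i + 2} ∩ {j : Fin (n - 3) | i + 1 ≤ (j : ℕ)})) <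
      Subgroup.closure (ρ '' {j : Fin (n - 3) | (j : ℕ) ≤ i + 2}) ⊓
        Subgroup.closure (ρ '' {j : Fin (n - 3) | i + 1 ≤ (j : ℕ)}) ∧
    ¬ IntersectionProperty ρ ∧ ¬ IsStringCGroup ρ := by
  have hi' : i + 7 ≤ n := by omega
  set J : Set (Fin (n - 3)) := {j : Fin (n - 3) | (j : ℕ) ≤ i + 2} with hJ
  set K : Set (Fin (n - 3)) := {j : Fin (n - 3) | i + 1 ≤ (j : ℕ)} with hK
  -- the witness permutation
  set g : Equiv.Perm (Fin n) :=
    Equiv.swap (⟨i + 3, by omega⟩ : Fin n) ⟨i + 4, by omega⟩ with hgdef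
  -- g belongs to the left factor
  have hsub1 : ({Equiv.swap (⟨i, by omega⟩ : Fin n) ⟨i + 1, by omega⟩,
      Equiv.swap (⟨i + 1, by omega⟩ : Fin n) ⟨i + 2, by omega⟩ *
        Equiv.swap (⟨i + 3, by omega⟩ : Fin n) ⟨i + 4, by omega⟩} : Set (Equiv.Perm (Fin n)))
      ⊆ ρ '' J := by
    intro z hz
    simp only [Set.mem_insert_iff, Set.mem_singleton_iff] at hz
    rcases hz with rfl | rfl
    · exact ⟨⟨i, by omega⟩, by simp only [hJ, Set.mem_setOf_eq]; omega,
        (hlow ⟨i, by omega⟩ (le_refl i))⟩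
    · exact ⟨⟨i + 1, by omega⟩, by simp only [hJ, Set.mem_setOf_eq]; omega, hip1⟩
  have hg1 : g ∈ Subgroup.closure (ρ '' J) :=
    Subgroup.closure_mono hsub1
      (memA (⟨i, by omega⟩ : Fin n) ⟨i + 1, by omega⟩ ⟨i + 2, by omega⟩ ⟨i + 3, by omega⟩
        ⟨i + 4, by omega⟩ (fne _ _ (by omega)) (fne _ _ (by omega)) (fne _ _ (by omega))
        (fne _ _ (by omega)) (fne _ _ (by omega)) (fne _ _ (by omega)) (fne _ _ (by omega)))
  -- g belongs to the right factor
  have hρc : ρ ⟨i + 3, by omega⟩ =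
      Equiv.swap (⟨i + 5, by omega⟩ : Fin n) ⟨i + 6, by omega⟩ := by
    have h := hhigh ⟨i + 3, by omega⟩ (le_refl _)
    simpa using h
  have hsub2 : ({Equiv.swap (⟨i + 1, by omega⟩ : Fin n) ⟨i + 2, by omega⟩ *
        Equiv.swap (⟨i + 3, by omega⟩ : Fin n) ⟨i + 4, by omega⟩,
      Equiv.swap (⟨i + 2, by omega⟩ : Fin n) ⟨i + 3, by omega⟩ *
        Equiv.swap (⟨i + 4, by omega⟩ : Fin n) ⟨i + 5, by omega⟩,
      Equiv.swap (⟨i + 5, by omega⟩ : Fin n) ⟨i + 6, by omega⟩} : Set (Equiv.Perm (Fin n)))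
      ⊆ ρ '' K := by
    intro z hz
    simp only [Set.mem_insert_iff, Set.mem_singleton_iff] at hz
    rcases hz with rfl | rfl | rfl
    · exact ⟨⟨i + 1, by omega⟩, by simp only [hK, Set.mem_setOf_eq]; omega, hip1⟩
    · exact ⟨⟨i + 2, by omega⟩, by simp only [hK, Set.mem_setOf_eq]; omega, hip2⟩
    · exact ⟨⟨i + 3, by omega⟩, by simp only [hK, Set.mem_setOf_eq]; omega, hρc⟩
  have hg2 : g ∈ Subgroup.closure (ρ '' K) :=
    Subgroup.closure_mono hsub2
      (memB (⟨i + 1, by omega⟩ : Fin n) ⟨i + 2, by omega⟩ ⟨i + 3, by omega⟩ ⟨i + 4, by omega⟩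
        ⟨i + 5, by omega⟩ ⟨i + 6, by omega⟩
        (fne _ _ (by omega)) (fne _ _ (by omega)) (fne _ _ (by omega)) (fne _ _ (by omega))
        (fne _ _ (by omega)) (fne _ _ (by omega)) (fne _ _ (by omega)) (fne _ _ (by omega))
        (fne _ _ (by omega)) (fne _ _ (by omega)) (fne _ _ (by omega)) (fne _ _ (by omega))
        (fne _ _ (by omega)) (fne _ _ (by omega)) (fne _ _ (by omega)))
  -- g is not in the closure of the intersection (sign argument)
  have hker : Subgroup.closure (ρ '' (J ∩ K)) ≤ Equiv.Perm.sign.ker := by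
    rw [Subgroup.closure_le]
    rintro z ⟨j, ⟨hj1, hj2⟩, rfl⟩
    simp only [hJ, hK, Set.mem_setOf_eq] at hj1 hj2
    have hval : (j : ℕ) = i + 1 ∨ (j : ℕ) = i + 2 := by omega
    have hmem : Equiv.Perm.sign (ρ j) = 1 := by
      rcases hval with h | h
      · have hje : j = ⟨i + 1, by omega⟩ := Fin.ext h
        rw [hje, hip1, map_mul, Equiv.Perm.sign_swap (fne _ _ (by omega)),
          Equiv.Perm.sign_swap (fne _ _ (by omega))]
        decide
      · have hje : j = ⟨i + 2, by omega⟩ := Fin.ext h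
        rw [hje, hip2, map_mul, Equiv.Perm.sign_swap (fne _ _ (by omega)),
          Equiv.Perm.sign_swap (fne _ _ (by omega))]
        decide
    simpa [MonoidHom.mem_ker] using hmem
  have hgnot : g ∉ Subgroup.closure (ρ '' (J ∩ K)) := by
    intro hmem
    have h1 : Equiv.Perm.sign g = 1 := hker hmem
    have h2 : Equiv.Perm.sign g = -1 := Equiv.Perm.sign_swap (fne _ _ (by omega))
    rw [h1] at h2
    exact absurd h2 (by decide)
  -- assemble
  have hle : Subgroup.closure (ρ '' (J ∩ K)) ≤
      Subgroup.closure (ρ '' J) ⊓ Subgroup.closure (ρ '' K) :=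
    le_inf (Subgroup.closure_mono (Set.image_mono Set.inter_subset_left))
      (Subgroup.closure_mono (Set.image_mono Set.inter_subset_right))
  have hgR : g ∈ Subgroup.closure (ρ '' J) ⊓ Subgroup.closure (ρ '' K) :=
    Subgroup.mem_inf.2 ⟨hg1, hg2⟩
  have hlt : Subgroup.closure (ρ '' (J ∩ K)) <
      Subgroup.closure (ρ '' J) ⊓ Subgroup.closure (ρ '' K) :=
    lt_of_le_not_ge hle (fun hR => hgnot (hR hgR))
  refine ⟨hlt, ?_, ?_⟩
  · intro hIP
    have h := hIP J K
    rw [h] at hlt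
    exact lt_irrefl _ hlt
  · intro hSC
    have h := hSC.2.2.2 J K
    rw [h] at hlt
    exact lt_irrefl _ hlt
end

section
/- Let n ≥ 11 and let i be an integer with 0 ≤ i ≤ n−9. Define permutations ρ_0, …, ρ_{n−5} of {1, …, n} by: ρ_j = (j+1, j+2) for 0 ≤ j ≤ i; ρ_{i+1} = (i+2, i+3)(i+4, i+5); ρ_{i+2} = (i+3, i+4)(i+5, i+6); ρ_j = (j+3, j+4) for i+3 ≤ j ≤ n−7; ρ_{n−6} = (n−3, n−2)(n−1, n); and ρ_{n−5} = (n−2, n−1). Then the intersection of the subgroup generated by ρ_0, …, ρ_{i+2} with the subgroup generated by ρ_{i+1}, …, ρ_{n−5} is strictly larger than the subgroup generated by ρ_{i+1} and ρ_{i+2}; in particular, ρ_0, …, ρ_{n−5} do not satisfy the intersection property and hence do not form a string C-group. -/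
section Helpers

variable {α : Type*} [DecidableEq α]

private lemma conj_invol {σ : Equiv.Perm α} (h : σ⁻¹ = σ) (x y : α) :
    σ * Equiv.swap x y * σ = Equiv.swap (σ x) (σ y) := by
  have h2 := (Equiv.swap_apply_apply σ x y).symm
  rwa [h] at h2

private lemma swap_commute' {a b c d : α} (h1 : c ≠ a) (h2 : c ≠ b) (h3 : d ≠ a) (h4 : d ≠ b) :
    Commute (Equiv.swap a b) (Equiv.swap c d) := by
  have h5 := conj_invol (Equiv.swap_inv a b) c d
  rw [Equiv.swap_apply_of_ne_of_ne h1 h2, Equiv.swap_apply_of_ne_of_ne h3 h4] at h5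
  have h6 := congrArg (· * Equiv.swap a b) h5
  simp only [mul_assoc, Equiv.swap_mul_self, mul_one] at h6
  exact h6

private lemma swap_congr {a b c d : α} (h1 : a = c) (h2 : b = d) :
    Equiv.swap a b = Equiv.swap c d := by rw [h1, h2]

private lemma left_word {p0 p1 p2 p3 p4 : α}
    (h01 : p0 ≠ p1) (h02 : p0 ≠ p2) (h12 : p1 ≠ p2)
    (h30 : p3 ≠ p0) (h31 : p3 ≠ p1) (h32 : p3 ≠ p2)
    (h40 : p4 ≠ p0) (h41 : p4 ≠ p1) (h42 : p4 ≠ p2) (h34 : p3 ≠ p4) :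
    (Equiv.swap p0 p1 * (Equiv.swap p1 p2 * Equiv.swap p3 p4)) *
      (Equiv.swap p0 p1 * (Equiv.swap p1 p2 * Equiv.swap p3 p4)) * Equiv.swap p0 p1 =
      Equiv.swap p1 p2 := by
  set t := Equiv.swap p0 p1 with ht
  set s := Equiv.swap p1 p2 with hs
  set w := Equiv.swap p3 p4 with hw
  have htt : t * t = 1 := Equiv.swap_mul_self _ _
  have hss : s * s = 1 := Equiv.swap_mul_self _ _
  have hww : w * w = 1 := Equiv.swap_mul_self _ _
  have cwt : w * t = t * w := (swap_commute' h30.symm h40.symm h31.symm h41.symm).eq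
  have cws : w * s = s * w := (swap_commute' h31.symm h41.symm h32.symm h42.symm).eq
  have e1 : t * s * t = Equiv.swap p0 p2 := by
    have h := conj_invol (Equiv.swap_inv p0 p1) p1 p2
    rwa [Equiv.swap_apply_right, Equiv.swap_apply_of_ne_of_ne h02.symm h12.symm] at h
  have e2 : s * t * s = Equiv.swap p0 p2 := by
    have h := conj_invol (Equiv.swap_inv p1 p2) p0 p1
    rwa [Equiv.swap_apply_of_ne_of_ne h01 h02, Equiv.swap_apply_left] at h
  calc (t * (s * w)) * (t * (s * w)) * t
      = t * s * (w * t) * s * w * t := by simp only [mul_assoc]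
    _ = t * s * (t * w) * s * w * t := by rw [cwt]
    _ = t * s * t * (w * s) * w * t := by simp only [mul_assoc]
    _ = t * s * t * (s * w) * w * t := by rw [cws]
    _ = t * s * t * s * (w * w) * t := by simp only [mul_assoc]
    _ = t * s * t * s * t := by rw [hww, mul_one]
    _ = Equiv.swap p0 p2 * s * t := by rw [e1]
    _ = s * t * s * s * t := by rw [← e2]
    _ = s * t * (s * s) * t := by simp only [mul_assoc]
    _ = s * (t * t) := by rw [hss, mul_one, mul_assoc]
    _ = s := by rw [htt, mul_one]

private lemma right_word {p1 p2 p3 p4 p5 q : α}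
    (h12 : p1 ≠ p2) (h13 : p1 ≠ p3) (h14 : p1 ≠ p4) (h15 : p1 ≠ p5) (h1q : p1 ≠ q)
    (h23 : p2 ≠ p3) (h24 : p2 ≠ p4) (h25 : p2 ≠ p5) (h2q : p2 ≠ q)
    (h34 : p3 ≠ p4) (h35 : p3 ≠ p5) (h3q : p3 ≠ q)
    (h45 : p4 ≠ p5) (h4q : p4 ≠ q) (h5q : p5 ≠ q) :
    ((Equiv.swap p2 p3 * Equiv.swap p4 p5) * Equiv.swap p5 q *
      (Equiv.swap p2 p3 * Equiv.swap p4 p5) * (Equiv.swap p1 p2 * Equiv.swap p3 p4)) ^ 3 =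
    Equiv.swap p1 p2 := by
  set B := Equiv.swap p2 p3 * Equiv.swap p4 p5 with hB
  set V := Equiv.swap p4 q with hV
  set W := Equiv.swap p3 p4 with hW
  set Z := Equiv.swap p3 q with hZ
  set D := Equiv.swap p1 p2 with hD
  have hBinv : B⁻¹ = B := by
    rw [hB, mul_inv_rev, Equiv.swap_inv, Equiv.swap_inv,
      (swap_commute' h24 h25 h34 h35).eq]
  have hb5 : B p5 = p4 := by
    rw [hB, Equiv.Perm.mul_apply, Equiv.swap_apply_right,
      Equiv.swap_apply_of_ne_of_ne h24.symm h34.symm]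
  have hbq : B q = q := by
    rw [hB, Equiv.Perm.mul_apply, Equiv.swap_apply_of_ne_of_ne h4q.symm h5q.symm,
      Equiv.swap_apply_of_ne_of_ne h2q.symm h3q.symm]
  have hBSB : B * Equiv.swap p5 q * B = V := by
    rw [conj_invol hBinv p5 q, hb5, hbq]
  have cDV : Commute D V := swap_commute' h14.symm h24.symm h1q.symm h2q.symm
  have cDW : Commute D W := swap_commute' h13.symm h23.symm h14.symm h24.symm
  have hWVW : W * V * W = Z := by
    have h := conj_invol (Equiv.swap_inv p3 p4) p4 q
    rwa [Equiv.swap_apply_right, Equiv.swap_apply_of_ne_of_ne h3q.symm h4q.symm] at h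
  have hVZV : V * Z * V = W := by
    have h := conj_invol (Equiv.swap_inv p4 q) p3 q
    rw [Equiv.swap_apply_of_ne_of_ne h34 h3q, Equiv.swap_apply_right] at h
    rw [h, hW, Equiv.swap_comm]
  have hWW : W * W = 1 := Equiv.swap_mul_self _ _
  have hDD : D * D = 1 := Equiv.swap_mul_self _ _
  have hVW3 : (V * W) ^ 3 = 1 := by
    have h3 : (V * W) ^ 3 = V * (W * (V * (W * (V * W)))) := by
      rw [pow_succ, pow_succ, pow_one]; simp only [mul_assoc]
    have hWVW' : ∀ x, W * (V * (W * x)) = Z * x := fun x => by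
      rw [← mul_assoc, ← mul_assoc, hWVW]
    have hVZV' : ∀ x, V * (Z * (V * x)) = W * x := fun x => by
      rw [← mul_assoc, ← mul_assoc, hVZV]
    rw [h3, hWVW' (V * W), hVZV' W, hWW]
  have hmain : B * Equiv.swap p5 q * B * (D * W) = D * (V * W) := by
    rw [hBSB, ← mul_assoc, cDV.symm.eq, mul_assoc]
  rw [hmain, (cDV.mul_right cDW).mul_pow, hVW3, mul_one, pow_succ, pow_two, hDD, one_mul]

private lemma chain_conj (H : Subgroup (Equiv.Perm α)) (q : α) :
    ∀ (k : ℕ) (p : ℕ → α), (∀ a, a ≤ k → p a ≠ q) →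
      (∀ m, m < k → Equiv.swap (p m) (p (m + 1)) ∈ H) →
      ∃ P ∈ H, P * Equiv.swap (p k) q * P⁻¹ = Equiv.swap (p 0) q := by
  intro k
  induction k with
  | zero => intro p _ _; exact ⟨1, one_mem H, by simp⟩
  | succ k ih =>
    intro p hq hmem
    obtain ⟨P, hPH, hPe⟩ := ih p (fun a ha => hq a (by omega)) (fun m hm => hmem m (by omega))
    refine ⟨P * Equiv.swap (p k) (p (k + 1)), mul_mem hPH (hmem k (by omega)), ?_⟩
    have hin : Equiv.swap (p k) (p (k + 1)) * Equiv.swap (p (k + 1)) q *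
        Equiv.swap (p k) (p (k + 1)) = Equiv.swap (p k) q := by
      have h := conj_invol (Equiv.swap_inv (p k) (p (k + 1))) (p (k + 1)) q
      rwa [Equiv.swap_apply_right,
        Equiv.swap_apply_of_ne_of_ne (hq k (by omega)).symm (hq (k + 1) (by omega)).symm] at h
    have hin' : ∀ x, Equiv.swap (p k) (p (k + 1)) * (Equiv.swap (p (k + 1)) q *
        (Equiv.swap (p k) (p (k + 1)) * x)) = Equiv.swap (p k) q * x := fun x => by
      rw [← mul_assoc, ← mul_assoc, hin]
    calc P * Equiv.swap (p k) (p (k + 1)) * Equiv.swap (p (k + 1)) q *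
          (P * Equiv.swap (p k) (p (k + 1)))⁻¹
        = P * (Equiv.swap (p k) (p (k + 1)) * (Equiv.swap (p (k + 1)) q *
            (Equiv.swap (p k) (p (k + 1)) * P⁻¹))) := by
          rw [mul_inv_rev, Equiv.swap_inv]; simp only [mul_assoc]
      _ = P * (Equiv.swap (p k) q * P⁻¹) := by rw [hin' P⁻¹]
      _ = Equiv.swap (p 0) q := by rw [← mul_assoc]; exact hPe

private def ptf (n : ℕ) (hn : 0 < n) (m : ℕ) : Fin n := ⟨m % n, Nat.mod_lt m hn⟩

private lemma ptf_eq {n : ℕ} (hn : 0 < n) {m : ℕ} (h : m < n) : ptf n hn m = ⟨m, h⟩ :=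
  Fin.ext (Nat.mod_eq_of_lt h)

private lemma ptf_ne {n : ℕ} (hn : 0 < n) {a b : ℕ} (ha : a < n) (hb : b < n) (hab : a ≠ b) :
    ptf n hn a ≠ ptf n hn b := by
  rw [ptf_eq hn ha, ptf_eq hn hb]
  exact fun h => hab (congrArg Fin.val h)

end Helpers

theorem stmt_10 (n i : ℕ) (hn : 11 ≤ n) (hi : i ≤ n - 9)
    (ρ : Fin (n - 4) → Equiv.Perm (Fin n))
    (hlow : ∀ j : Fin (n - 4), (j : ℕ) ≤ i → ρ j =
      Equiv.swap (⟨(j : ℕ), by have := j.isLt; omega⟩ : Fin n) ⟨(j : ℕ) + 1, by have := j.isLt; omega⟩)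
    (hip1 : ρ ⟨i + 1, by omega⟩ =
      Equiv.swap (⟨i + 1, by omega⟩ : Fin n) ⟨i + 2, by omega⟩ *
        Equiv.swap (⟨i + 3, by omega⟩ : Fin n) ⟨i + 4, by omega⟩)
    (hip2 : ρ ⟨i + 2, by omega⟩ =
      Equiv.swap (⟨i + 2, by omega⟩ : Fin n) ⟨i + 3, by omega⟩ *
        Equiv.swap (⟨i + 4, by omega⟩ : Fin n) ⟨i + 5, by omega⟩)
    (hhigh : ∀ j : Fin (n - 4), i + 3 ≤ (j : ℕ) → (j : ℕ) ≤ n - 7 → ρ j =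
      Equiv.swap (⟨(j : ℕ) + 2, by have := j.isLt; omega⟩ : Fin n) ⟨(j : ℕ) + 3, by have := j.isLt; omega⟩)
    (htail1 : ρ ⟨n - 6, by omega⟩ =
      Equiv.swap (⟨n - 4, by omega⟩ : Fin n) ⟨n - 3, by omega⟩ *
        Equiv.swap (⟨n - 2, by omega⟩ : Fin n) ⟨n - 1, by omega⟩)
    (htail2 : ρ ⟨n - 5, by omega⟩ =
      Equiv.swap (⟨n - 3, by omega⟩ : Fin n) ⟨n - 2, by omega⟩) :
    Subgroup.closure (ρ '' ({j : Fin (n - 4) | (j : ℕ) ≤ i + 2} ∩ {j : Fin (n - 4) | i + 1 ≤ (j : ℕ)})) <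
      Subgroup.closure (ρ '' {j : Fin (n - 4) | (j : ℕ) ≤ i + 2}) ⊓
        Subgroup.closure (ρ '' {j : Fin (n - 4) | i + 1 ≤ (j : ℕ)}) ∧
    ¬ IntersectionProperty ρ ∧ ¬ IsStringCGroup ρ := by
  have hn0 : 0 < n := by omega
  have hi9 : i + 9 ≤ n := by omega
  set J : Set (Fin (n - 4)) := {j : Fin (n - 4) | (j : ℕ) ≤ i + 2} with hJ
  set K : Set (Fin (n - 4)) := {j : Fin (n - 4) | i + 1 ≤ (j : ℕ)} with hK
  set pt : ℕ → Fin n := ptf n hn0 with hptdef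
  have hpt : ∀ {m : ℕ} (h : m < n), pt m = ⟨m, h⟩ := fun h => ptf_eq hn0 h
  have hne : ∀ {a b : ℕ}, a < n → b < n → a ≠ b → pt a ≠ pt b :=
    fun ha hb hab => ptf_ne hn0 ha hb hab
  set g : Equiv.Perm (Fin n) := Equiv.swap (pt (i + 1)) (pt (i + 2)) with hg
  -- rewritten hypotheses
  have e0 : ρ ⟨i, by omega⟩ = Equiv.swap (pt i) (pt (i + 1)) := by
    rw [hpt (show i < n by omega), hpt (show i + 1 < n by omega)]
    exact hlow ⟨i, by omega⟩ (le_refl i)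
  have e1 : ρ ⟨i + 1, by omega⟩ =
      Equiv.swap (pt (i + 1)) (pt (i + 2)) * Equiv.swap (pt (i + 3)) (pt (i + 4)) := by
    rw [hpt (show i + 1 < n by omega), hpt (show i + 2 < n by omega),
      hpt (show i + 3 < n by omega), hpt (show i + 4 < n by omega)]
    exact hip1
  have e2 : ρ ⟨i + 2, by omega⟩ =
      Equiv.swap (pt (i + 2)) (pt (i + 3)) * Equiv.swap (pt (i + 4)) (pt (i + 5)) := by
    rw [hpt (show i + 2 < n by omega), hpt (show i + 3 < n by omega),
      hpt (show i + 4 < n by omega), hpt (show i + 5 < n by omega)]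
    exact hip2
  have ec : ρ ⟨n - 6, by omega⟩ =
      Equiv.swap (pt (n - 4)) (pt (n - 3)) * Equiv.swap (pt (n - 2)) (pt (n - 1)) := by
    rw [hpt (show n - 4 < n by omega), hpt (show n - 3 < n by omega),
      hpt (show n - 2 < n by omega), hpt (show n - 1 < n by omega)]
    exact htail1
  have ed : ρ ⟨n - 5, by omega⟩ = Equiv.swap (pt (n - 3)) (pt (n - 2)) := by
    rw [hpt (show n - 3 < n by omega), hpt (show n - 2 < n by omega)]
    exact htail2
  -- left membership
  have hgJ : g ∈ Subgroup.closure (ρ '' J) := by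
    have m0 : ρ ⟨i, by omega⟩ ∈ ρ '' J :=
      ⟨⟨i, by omega⟩, by show i ≤ i + 2; omega, rfl⟩
    have m1 : ρ ⟨i + 1, by omega⟩ ∈ ρ '' J :=
      ⟨⟨i + 1, by omega⟩, by show i + 1 ≤ i + 2; omega, rfl⟩
    have hexp : (ρ ⟨i, by omega⟩ * ρ ⟨i + 1, by omega⟩) *
        (ρ ⟨i, by omega⟩ * ρ ⟨i + 1, by omega⟩) * ρ ⟨i, by omega⟩ = g := by
      rw [e0, e1, hg]
      exact left_word
        (hne (by omega) (by omega) (by omega)) (hne (by omega) (by omega) (by omega))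
        (hne (by omega) (by omega) (by omega)) (hne (by omega) (by omega) (by omega))
        (hne (by omega) (by omega) (by omega)) (hne (by omega) (by omega) (by omega))
        (hne (by omega) (by omega) (by omega)) (hne (by omega) (by omega) (by omega))
        (hne (by omega) (by omega) (by omega)) (hne (by omega) (by omega) (by omega))
    rw [← hexp]
    exact mul_mem (mul_mem (mul_mem (Subgroup.subset_closure m0) (Subgroup.subset_closure m1))
      (mul_mem (Subgroup.subset_closure m0) (Subgroup.subset_closure m1)))
      (Subgroup.subset_closure m0)
  -- right membership
  have hgK : g ∈ Subgroup.closure (ρ '' K) := by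
    have mC : ρ ⟨n - 6, by omega⟩ ∈ ρ '' K :=
      ⟨⟨n - 6, by omega⟩, by show i + 1 ≤ n - 6; omega, rfl⟩
    have mD : ρ ⟨n - 5, by omega⟩ ∈ ρ '' K :=
      ⟨⟨n - 5, by omega⟩, by show i + 1 ≤ n - 5; omega, rfl⟩
    have m1 : ρ ⟨i + 1, by omega⟩ ∈ ρ '' K :=
      ⟨⟨i + 1, by omega⟩, by show i + 1 ≤ i + 1; omega, rfl⟩
    have m2 : ρ ⟨i + 2, by omega⟩ ∈ ρ '' K :=
      ⟨⟨i + 2, by omega⟩, by show i + 1 ≤ i + 2; omega, rfl⟩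
    obtain ⟨P, hPH, hPe⟩ := chain_conj (Subgroup.closure (ρ '' K)) (pt (n - 1)) (n - 9 - i)
      (fun m => pt (i + 5 + m))
      (fun a ha => hne (by omega) (by omega) (by omega))
      (by
        intro m hm
        show Equiv.swap (pt (i + 5 + m)) (pt (i + 5 + (m + 1))) ∈ _
        have hxeq : Equiv.swap (pt (i + 5 + m)) (pt (i + 5 + (m + 1))) =
            ρ ⟨i + 3 + m, by omega⟩ := by
          rw [hpt (show i + 5 + m < n by omega), hpt (show i + 5 + (m + 1) < n by omega),
            hhigh ⟨i + 3 + m, by omega⟩ (show i + 3 ≤ i + 3 + m by omega)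
              (show i + 3 + m ≤ n - 7 by omega)]
          exact swap_congr (Fin.ext (show i + 5 + m = i + 3 + m + 2 by omega))
            (Fin.ext (show i + 5 + (m + 1) = i + 3 + m + 3 by omega))
        rw [hxeq]
        exact Subgroup.subset_closure
          ⟨⟨i + 3 + m, by omega⟩, by show i + 1 ≤ i + 3 + m; omega, rfl⟩)
    have hτeq : ρ ⟨n - 6, by omega⟩ * ρ ⟨n - 5, by omega⟩ * ρ ⟨n - 6, by omega⟩ =
        Equiv.swap (pt (n - 4)) (pt (n - 1)) := by
      rw [ec, ed]
      set w1 := Equiv.swap (pt (n - 4)) (pt (n - 3)) with hw1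
      set w2 := Equiv.swap (pt (n - 2)) (pt (n - 1)) with hw2
      have hinv : (w1 * w2)⁻¹ = w1 * w2 := by
        rw [hw1, hw2, mul_inv_rev, Equiv.swap_inv, Equiv.swap_inv,
          (swap_commute'
            (hne (by omega) (by omega) (by omega)) (hne (by omega) (by omega) (by omega))
            (hne (by omega) (by omega) (by omega)) (hne (by omega) (by omega) (by omega))).eq]
      have ha1 : (w1 * w2) (pt (n - 3)) = pt (n - 4) := by
        rw [Equiv.Perm.mul_apply, hw2, Equiv.swap_apply_of_ne_of_ne
            (hne (by omega) (by omega) (by omega)) (hne (by omega) (by omega) (by omega)),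
          hw1, Equiv.swap_apply_right]
      have ha2 : (w1 * w2) (pt (n - 2)) = pt (n - 1) := by
        rw [Equiv.Perm.mul_apply, hw2, Equiv.swap_apply_left, hw1,
          Equiv.swap_apply_of_ne_of_ne
            (hne (by omega) (by omega) (by omega)) (hne (by omega) (by omega) (by omega))]
      rw [conj_invol hinv, ha1, ha2]
    have e45 : pt (i + 5 + (n - 9 - i)) = pt (n - 4) := congrArg pt (by omega)
    have hPe' : P * Equiv.swap (pt (n - 4)) (pt (n - 1)) * P⁻¹ =
        Equiv.swap (pt (i + 5)) (pt (n - 1)) := by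
      rw [← e45]; exact hPe
    have hSmem : P * (ρ ⟨n - 6, by omega⟩ * ρ ⟨n - 5, by omega⟩ * ρ ⟨n - 6, by omega⟩) * P⁻¹ ∈
        Subgroup.closure (ρ '' K) :=
      mul_mem (mul_mem hPH (mul_mem (mul_mem (Subgroup.subset_closure mC)
        (Subgroup.subset_closure mD)) (Subgroup.subset_closure mC))) (inv_mem hPH)
    have hSeq : P * (ρ ⟨n - 6, by omega⟩ * ρ ⟨n - 5, by omega⟩ * ρ ⟨n - 6, by omega⟩) * P⁻¹ =
        Equiv.swap (pt (i + 5)) (pt (n - 1)) := by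
      rw [hτeq]; exact hPe'
    have hexp : (ρ ⟨i + 2, by omega⟩ *
        (P * (ρ ⟨n - 6, by omega⟩ * ρ ⟨n - 5, by omega⟩ * ρ ⟨n - 6, by omega⟩) * P⁻¹) *
        ρ ⟨i + 2, by omega⟩ * ρ ⟨i + 1, by omega⟩) ^ 3 = g := by
      rw [e1, e2, hSeq, hg]
      exact right_word
        (hne (by omega) (by omega) (by omega)) (hne (by omega) (by omega) (by omega))
        (hne (by omega) (by omega) (by omega)) (hne (by omega) (by omega) (by omega))
        (hne (by omega) (by omega) (by omega)) (hne (by omega) (by omega) (by omega))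
        (hne (by omega) (by omega) (by omega)) (hne (by omega) (by omega) (by omega))
        (hne (by omega) (by omega) (by omega)) (hne (by omega) (by omega) (by omega))
        (hne (by omega) (by omega) (by omega)) (hne (by omega) (by omega) (by omega))
        (hne (by omega) (by omega) (by omega)) (hne (by omega) (by omega) (by omega))
        (hne (by omega) (by omega) (by omega))
    rw [← hexp]
    exact pow_mem (mul_mem (mul_mem (mul_mem (Subgroup.subset_closure m2) hSmem)
      (Subgroup.subset_closure m2)) (Subgroup.subset_closure m1)) 3
  -- non-membership in the small closure
  have hgNot : g ∉ Subgroup.closure (ρ '' (J ∩ K)) := by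
    intro hmem
    have hsub : ρ '' (J ∩ K) ⊆ ↑(Equiv.Perm.sign (α := Fin n)).ker := by
      rintro x ⟨j, ⟨hj1, hj2⟩, rfl⟩
      have hj1' : (j : ℕ) ≤ i + 2 := hj1
      have hj2' : i + 1 ≤ (j : ℕ) := hj2
      have hcases : (j : ℕ) = i + 1 ∨ (j : ℕ) = i + 2 := by omega
      have hker : ∀ (a b c d : Fin n), a ≠ b → c ≠ d →
          Equiv.swap a b * Equiv.swap c d ∈ (Equiv.Perm.sign (α := Fin n)).ker := by
        intro a b c d hab hcd
        rw [MonoidHom.mem_ker, map_mul, Equiv.Perm.sign_swap hab, Equiv.Perm.sign_swap hcd]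
        decide
      rcases hcases with h | h
      · have hje : j = (⟨i + 1, by omega⟩ : Fin (n - 4)) := Fin.ext h
        rw [SetLike.mem_coe, hje, e1]
        exact hker _ _ _ _ (hne (by omega) (by omega) (by omega))
          (hne (by omega) (by omega) (by omega))
      · have hje : j = (⟨i + 2, by omega⟩ : Fin (n - 4)) := Fin.ext h
        rw [SetLike.mem_coe, hje, e2]
        exact hker _ _ _ _ (hne (by omega) (by omega) (by omega))
          (hne (by omega) (by omega) (by omega))
    have hle : Subgroup.closure (ρ '' (J ∩ K)) ≤ (Equiv.Perm.sign (α := Fin n)).ker :=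
      (Subgroup.closure_le _).mpr hsub
    have h1 : Equiv.Perm.sign g = 1 := hle hmem
    rw [hg, Equiv.Perm.sign_swap (hne (by omega) (by omega) (by omega))] at h1
    exact absurd h1 (by decide)
  have hle2 : Subgroup.closure (ρ '' (J ∩ K)) ≤
      Subgroup.closure (ρ '' J) ⊓ Subgroup.closure (ρ '' K) :=
    le_inf (Subgroup.closure_mono (Set.image_mono (f := ρ) Set.inter_subset_left))
      (Subgroup.closure_mono (Set.image_mono (f := ρ) Set.inter_subset_right))
  have hlt : Subgroup.closure (ρ '' (J ∩ K)) <
      Subgroup.closure (ρ '' J) ⊓ Subgroup.closure (ρ '' K) := by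
    refine lt_of_le_of_ne hle2 (fun h => hgNot ?_)
    rw [h]
    exact Subgroup.mem_inf.mpr ⟨hgJ, hgK⟩
  refine ⟨hlt, ?_, ?_⟩
  · intro h
    exact hlt.ne ((h J K).symm)
  · intro h
    exact hlt.ne ((h.2.2.2 J K).symm)
end
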